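/- Let G = K_{n,n} with n ≥ 4 and bipartition X, Y each of size n. For every n-assignment L for G and every request r of L with nonempty domain D, there is a proper L-coloring of G that satisfies at least |D|/2 of the vertex requests. -/

import Mathlib

open Finset

/-- `f` is a proper `L`-coloring of `G`: every vertex gets a color from its list and
adjacent vertices get different colors. -/
def properListColoring {V : Type*} (G : SimpleGraph V) (L : V → Finset ℕ) (f : V → ℕ) : Prop :=
  (∀ v, f v ∈ L v) ∧ ∀ u v, G.Adj u v → f u ≠ f v

section Build
variable {n : ℕ}

lemma build (L : Fin n ⊕ Fin n → Finset ℕ) (r : Fin n ⊕ Fin n → ℕ)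
    (gL : Fin n → ℕ) (hg : ∀ x, gL x ∈ L (Sum.inl x))
    (hav : ∀ y, (L (Sum.inr y) \ Finset.image gL Finset.univ).Nonempty) :
    ∃ f, properListColoring (completeBipartiteGraph (Fin n) (Fin n)) L f ∧
      (∀ x, f (Sum.inl x) = gL x) ∧
      (∀ y, r (Sum.inr y) ∈ L (Sum.inr y) \ Finset.image gL Finset.univ →
        f (Sum.inr y) = r (Sum.inr y)) := by
  classical
  set C := Finset.image gL Finset.univ with hC
  refine ⟨Sum.elim gL (fun y => if r (Sum.inr y) ∈ L (Sum.inr y) \ C then r (Sum.inr y)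
      else (hav y).choose), ⟨?_, ?_⟩, fun x => rfl, fun y hy => by simp only [Sum.elim_inr, if_pos hy]⟩
  · rintro (x | y)
    · exact hg x
    · simp only [Sum.elim_inr]
      split
      · exact (Finset.mem_sdiff.1 (by assumption)).1
      · exact (Finset.mem_sdiff.1 (hav y).choose_spec).1
  · have key : ∀ y, (Sum.elim gL (fun y => if r (Sum.inr y) ∈ L (Sum.inr y) \ C then r (Sum.inr y)
        else (hav y).choose) (Sum.inr y)) ∉ C := by
      intro y
      simp only [Sum.elim_inr]
      split
      · exact (Finset.mem_sdiff.1 (by assumption)).2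
      · exact (Finset.mem_sdiff.1 (hav y).choose_spec).2
    rintro (x | y) (x' | y') hadj <;> simp only [completeBipartiteGraph_adj] at hadj <;>
      simp only [Sum.isLeft_inl, Sum.isRight_inl, Sum.isLeft_inr, Sum.isRight_inr] at hadj
    · simp at hadj
    · intro h
      exact key y' (h ▸ Finset.mem_image_of_mem gL (Finset.mem_univ x))
    · intro h
      exact key y (h.symm ▸ Finset.mem_image_of_mem gL (Finset.mem_univ x'))
    · simp at hadj

end Build

section Helpers
variable {n : ℕ}

lemma avail_of_small (L : Fin n ⊕ Fin n → Finset ℕ) (hL : ∀ v, (L v).card = n)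
    (gL : Fin n → ℕ) (hsmall : (Finset.image gL Finset.univ).card < n) :
    ∀ y, (L (Sum.inr y) \ Finset.image gL Finset.univ).Nonempty := by
  intro y
  rw [← Finset.card_pos]
  have h1 : (L (Sum.inr y)).card - (Finset.image gL Finset.univ).card ≤
      (L (Sum.inr y) \ Finset.image gL Finset.univ).card := Finset.le_card_sdiff _ _
  have h2 := hL (Sum.inr y)
  omega

lemma case_build (L : Fin n ⊕ Fin n → Finset ℕ) (r : Fin n ⊕ Fin n → ℕ)
    (D : Finset (Fin n ⊕ Fin n))
    (gL : Fin n → ℕ) (hg : ∀ x, gL x ∈ L (Sum.inl x))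
    (hav : ∀ y, (L (Sum.inr y) \ Finset.image gL Finset.univ).Nonempty)
    (SL : Finset (Fin n)) (hSL : ∀ x ∈ SL, Sum.inl x ∈ D ∧ gL x = r (Sum.inl x))
    (SR : Finset (Fin n))
    (hSR : ∀ y ∈ SR, Sum.inr y ∈ D ∧
      r (Sum.inr y) ∈ L (Sum.inr y) \ Finset.image gL Finset.univ)
    (hcard : D.card ≤ 2 * (SL.card + SR.card)) :
    ∃ f, properListColoring (completeBipartiteGraph (Fin n) (Fin n)) L f ∧
      D.card ≤ 2 * (D.filter fun v => f v = r v).card := by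
  classical
  obtain ⟨f, hf, hfl, hfr⟩ := build L r gL hg hav
  refine ⟨f, hf, le_trans hcard ?_⟩
  have hsub : SL.image Sum.inl ∪ SR.image Sum.inr ⊆ D.filter fun v => f v = r v := by
    intro v hv
    rw [Finset.mem_union] at hv
    rcases hv with hv | hv
    · obtain ⟨x, hx, rfl⟩ := Finset.mem_image.1 hv
      exact Finset.mem_filter.2 ⟨(hSL x hx).1, by rw [hfl x, (hSL x hx).2]⟩
    · obtain ⟨y, hy, rfl⟩ := Finset.mem_image.1 hv
      exact Finset.mem_filter.2 ⟨(hSR y hy).1, hfr y (hSR y hy).2⟩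
  have hdisj : Disjoint (SL.image Sum.inl) (SR.image Sum.inr) := by
    rw [Finset.disjoint_left]
    rintro v hv hv'
    obtain ⟨x, _, rfl⟩ := Finset.mem_image.1 hv
    obtain ⟨y, _, h⟩ := Finset.mem_image.1 hv'
    exact absurd h (by simp)
  have hcard2 : (SL.image Sum.inl ∪ SR.image Sum.inr).card = SL.card + SR.card := by
    rw [Finset.card_union_of_disjoint hdisj,
      Finset.card_image_of_injective _ Sum.inl_injective,
      Finset.card_image_of_injective _ Sum.inr_injective]
  have := Finset.card_le_card hsub
  omega

end Helpers

section Main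
variable {n : ℕ}

lemma main_lemma (hn : 4 ≤ n) (L : Fin n ⊕ Fin n → Finset ℕ)
    (hL : ∀ v, (L v).card = n)
    (D : Finset (Fin n ⊕ Fin n)) (hD : D.Nonempty)
    (r : Fin n ⊕ Fin n → ℕ) (hr : ∀ v ∈ D, r v ∈ L v)
    (hside : D.toRight.card ≤ D.toLeft.card) :
    ∃ f, properListColoring (completeBipartiteGraph (Fin n) (Fin n)) L f ∧
      D.card ≤ 2 * (D.filter fun v => f v = r v).card := by
  classical
  have hnpos : 0 < n := by omega
  have hLne : ∀ v, (L v).Nonempty := fun v => Finset.card_pos.1 (by rw [hL v]; omega)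
  set d : Fin n → ℕ := fun x => (hLne (Sum.inl x)).choose with hd_def
  have hd : ∀ x, d x ∈ L (Sum.inl x) := fun x => (hLne (Sum.inl x)).choose_spec
  set m : ℕ := (D.card + 1) / 2 with hm_def
  have hDsum : D.toLeft.card + D.toRight.card = D.card := Finset.card_toLeft_add_card_toRight
  have hDpos : 1 ≤ D.card := Finset.card_pos.2 hD
  have hDle : D.card ≤ 2 * n := by
    have h1 : D.toLeft.card ≤ n := le_trans (Finset.card_le_univ _) (by simp)
    have h2 : D.toRight.card ≤ n := le_trans (Finset.card_le_univ _) (by simp)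
    omega
  have hmL : m ≤ D.toLeft.card := by omega
  have h2m : D.card ≤ 2 * m := by omega
  have hDlb : 2 * m - 1 ≤ D.card := by omega
  have hm1 : 1 ≤ m := by omega
  have hmn : m ≤ n := le_trans hmL (le_trans (Finset.card_le_univ _) (by simp))
  obtain ⟨S, hSsub, hScard⟩ := Finset.exists_subset_card_eq hmL
  have hSD : ∀ x ∈ S, Sum.inl x ∈ D := fun x hx => Finset.mem_toLeft.1 (hSsub hx)
  have hrS : ∀ x ∈ S, r (Sum.inl x) ∈ L (Sum.inl x) := fun x hx => hr _ (hSD x hx)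
  set R : Finset ℕ := S.image (fun x => r (Sum.inl x)) with hR_def
  rcases lt_or_eq_of_le (Finset.card_image_le (s := S) (f := fun x => r (Sum.inl x)))
    with hRlt | hReq
  · -- Case A : r not injective on S
    have hRlt' : R.card < m := by rw [hR_def]; omega
    set gL : Fin n → ℕ := fun x => if x ∈ S then r (Sum.inl x) else d x with hgL_def
    have hg : ∀ x, gL x ∈ L (Sum.inl x) := by
      intro x; by_cases hx : x ∈ S <;> simp only [hgL_def, if_pos, if_neg, hx, ite_true,
        ite_false]
      · exact hrS x hx
      · exact hd x
    have himg : Finset.image gL Finset.univ ⊆ R ∪ (Finset.univ \ S).image d := by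
      intro c hc
      obtain ⟨x, -, rfl⟩ := Finset.mem_image.1 hc
      by_cases hx : x ∈ S
      · refine Finset.mem_union_left _ ?_
        rw [hgL_def]; simp only [if_pos hx]
        exact Finset.mem_image_of_mem _ hx
      · refine Finset.mem_union_right _ ?_
        rw [hgL_def]; simp only [if_neg hx]
        exact Finset.mem_image_of_mem _ (Finset.mem_sdiff.2 ⟨Finset.mem_univ x, hx⟩)
    have hsmall : (Finset.image gL Finset.univ).card < n := by
      have h1 := Finset.card_le_card himg
      have h2 := Finset.card_union_le R ((Finset.univ \ S).image d)
      have h3 : ((Finset.univ \ S).image d).card ≤ n - m := by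
        refine le_trans Finset.card_image_le ?_
        rw [Finset.card_sdiff_of_subset (Finset.subset_univ S), hScard, Finset.card_univ,
          Fintype.card_fin]
      omega
    exact case_build L r D gL hg (avail_of_small L hL gL hsmall) S
      (fun x hx => ⟨hSD x hx, by rw [hgL_def]; simp [hx]⟩) ∅ (by simp)
      (by simp only [Finset.card_empty, Nat.add_zero, hScard]; exact h2m)
  · -- r injective on S
    have hRcard : R.card = m := by rw [hR_def]; rw [hReq, hScard]
    have hinj : Set.InjOn (fun x => r (Sum.inl x)) S :=
      Finset.injOn_of_card_image_eq (by rw [hReq])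
    set F : Finset (Fin n) := Finset.univ \ S with hF_def
    have hFcard : F.card = n - m := by
      rw [hF_def, Finset.card_sdiff_of_subset (Finset.subset_univ S), hScard, Finset.card_univ,
        Fintype.card_fin]
    by_cases h2a : ∃ v ∈ F, ∃ c ∈ L (Sum.inl v), c ∈ R
    · obtain ⟨v, hvF, c0, hc0L, hc0R⟩ := h2a
      have hvS : v ∉ S := (Finset.mem_sdiff.1 hvF).2
      have hFpos : 1 ≤ n - m := by
        have h := Finset.card_pos.2 ⟨v, hvF⟩
        omega
      set gL : Fin n → ℕ :=
        fun x => if x ∈ S then r (Sum.inl x) else if x = v then c0 else d x with hgL_def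
      have hg : ∀ x, gL x ∈ L (Sum.inl x) := by
        intro x
        rw [hgL_def]
        by_cases hx : x ∈ S
        · simp only [if_pos hx]; exact hrS x hx
        · simp only [if_neg hx]
          by_cases hxv : x = v
          · subst hxv; simp only [if_pos rfl]; exact hc0L
          · simp only [if_neg hxv]; exact hd x
      have himg : Finset.image gL Finset.univ ⊆ R ∪ (F.erase v).image d := by
        intro c hc
        obtain ⟨x, -, rfl⟩ := Finset.mem_image.1 hc
        rw [hgL_def]
        by_cases hx : x ∈ S
        · simp only [if_pos hx]
          exact Finset.mem_union_left _ (Finset.mem_image_of_mem _ hx)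
        · simp only [if_neg hx]
          by_cases hxv : x = v
          · simp only [if_pos hxv]
            exact Finset.mem_union_left _ hc0R
          · simp only [if_neg hxv]
            refine Finset.mem_union_right _ (Finset.mem_image_of_mem _ ?_)
            exact Finset.mem_erase.2 ⟨hxv, Finset.mem_sdiff.2 ⟨Finset.mem_univ x, hx⟩⟩
      have hsmall : (Finset.image gL Finset.univ).card < n := by
        have h1 := Finset.card_le_card himg
        have h2 := Finset.card_union_le R ((F.erase v).image d)
        have h3 : ((F.erase v).image d).card ≤ n - m - 1 := by
          refine le_trans Finset.card_image_le ?_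
          rw [Finset.card_erase_of_mem hvF, hFcard]
        omega
      exact case_build L r D gL hg (avail_of_small L hL gL hsmall) S
        (fun x hx => ⟨hSD x hx, by rw [hgL_def]; simp [hx]⟩) ∅ (by simp)
        (by simp only [Finset.card_empty, Nat.add_zero, hScard]; exact h2m)
    by_cases h2b : ∃ v ∈ F, ∃ w ∈ F, v ≠ w ∧ ∃ c ∈ L (Sum.inl v), c ∈ L (Sum.inl w)
    · obtain ⟨v, hvF, w, hwF, hvw, c0, hc0v, hc0w⟩ := h2b
      have hvS : v ∉ S := (Finset.mem_sdiff.1 hvF).2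
      have hwS : w ∉ S := (Finset.mem_sdiff.1 hwF).2
      have hwF' : w ∈ F.erase v := Finset.mem_erase.2 ⟨(Ne.symm hvw), hwF⟩
      have hF2 : 2 ≤ n - m := by
        have h1 := Finset.card_pos.2 ⟨w, hwF'⟩
        have h2 : (F.erase v).card = F.card - 1 := Finset.card_erase_of_mem hvF
        omega
      set gL : Fin n → ℕ :=
        fun x => if x ∈ S then r (Sum.inl x) else if x = v ∨ x = w then c0 else d x with hgL_def
      have hg : ∀ x, gL x ∈ L (Sum.inl x) := by
        intro x
        rw [hgL_def]
        by_cases hx : x ∈ S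
        · simp only [if_pos hx]; exact hrS x hx
        · simp only [if_neg hx]
          by_cases hxv : x = v ∨ x = w
          · simp only [if_pos hxv]
            rcases hxv with rfl | rfl
            · exact hc0v
            · exact hc0w
          · simp only [if_neg hxv]; exact hd x
      have himg : Finset.image gL Finset.univ ⊆
          insert c0 (R ∪ ((F.erase v).erase w).image d) := by
        intro c hc
        obtain ⟨x, -, rfl⟩ := Finset.mem_image.1 hc
        rw [hgL_def]
        by_cases hx : x ∈ S
        · simp only [if_pos hx]
          exact Finset.mem_insert_of_mem (Finset.mem_union_left _
            (Finset.mem_image_of_mem _ hx))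
        · simp only [if_neg hx]
          by_cases hxv : x = v ∨ x = w
          · simp only [if_pos hxv]
            exact Finset.mem_insert_self _ _
          · simp only [if_neg hxv]
            push_neg at hxv
            refine Finset.mem_insert_of_mem (Finset.mem_union_right _
              (Finset.mem_image_of_mem _ ?_))
            exact Finset.mem_erase.2 ⟨hxv.2, Finset.mem_erase.2
              ⟨hxv.1, Finset.mem_sdiff.2 ⟨Finset.mem_univ x, hx⟩⟩⟩
      have hsmall : (Finset.image gL Finset.univ).card < n := by
        have h1 := Finset.card_le_card himg
        have h2 := Finset.card_insert_le c0 (R ∪ ((F.erase v).erase w).image d)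
        have h3 := Finset.card_union_le R (((F.erase v).erase w).image d)
        have h4 : (((F.erase v).erase w).image d).card ≤ n - m - 2 := by
          refine le_trans Finset.card_image_le ?_
          rw [Finset.card_erase_of_mem hwF', Finset.card_erase_of_mem hvF, hFcard]
          omega
        omega
      exact case_build L r D gL hg (avail_of_small L hL gL hsmall) S
        (fun x hx => ⟨hSD x hx, by rw [hgL_def]; simp [hx]⟩) ∅ (by simp)
        (by simp only [Finset.card_empty, Nat.add_zero, hScard]; exact h2m)
    push_neg at h2a h2b
    rcases (show m + 2 ≤ n ∨ m + 1 = n ∨ m = n by omega) with hk | hk | hk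
    · -- k ≥ 2
      have hF2 : 1 < F.card := by rw [hFcard]; omega
      obtain ⟨v1, hv1F, v2, hv2F, hv12⟩ := Finset.one_lt_card.1 hF2
      have hv1S : v1 ∉ S := (Finset.mem_sdiff.1 hv1F).2
      have hv2S : v2 ∉ S := (Finset.mem_sdiff.1 hv2F).2
      set gL2 : ℕ → ℕ → Fin n → ℕ := fun c1 c2 x =>
        if x ∈ S then r (Sum.inl x) else if x = v1 then c1 else if x = v2 then c2 else d x
        with hgL2
      have hg : ∀ c1 ∈ L (Sum.inl v1), ∀ c2 ∈ L (Sum.inl v2), ∀ x,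
          gL2 c1 c2 x ∈ L (Sum.inl x) := by
        intro c1 hc1 c2 hc2 x
        rw [hgL2]
        by_cases hx : x ∈ S
        · simp only [if_pos hx]; exact hrS x hx
        · simp only [if_neg hx]
          by_cases h1 : x = v1
          · subst h1; simp only [if_pos rfl]; exact hc1
          · simp only [if_neg h1]
            by_cases h2 : x = v2
            · subst h2; simp only [if_pos rfl]; exact hc2
            · simp only [if_neg h2]; exact hd x
      have key : ∀ (c1 c2 : ℕ), c1 ∈ L (Sum.inl v1) → c2 ∈ L (Sum.inl v2) → ∀ y : Fin n,
          L (Sum.inr y) \ Finset.image (gL2 c1 c2) Finset.univ = ∅ →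
          (L (Sum.inr y) = Finset.image (gL2 c1 c2) Finset.univ) ∧
          (∀ c ∈ L (Sum.inl v1), c ∈ L (Sum.inr y) → c = c1) ∧
          (∀ c ∈ L (Sum.inl v2), c ∈ L (Sum.inr y) → c = c2) := by
        intro c1 c2 hc1 hc2 y hy
        have hsub : L (Sum.inr y) ⊆ Finset.image (gL2 c1 c2) Finset.univ :=
          Finset.sdiff_eq_empty_iff_subset.1 hy
        have heq : L (Sum.inr y) = Finset.image (gL2 c1 c2) Finset.univ := by
          refine Finset.eq_of_subset_of_card_le hsub ?_
          rw [hL (Sum.inr y)]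
          exact le_trans Finset.card_image_le (by simp)
        refine ⟨heq, ?_, ?_⟩
        · intro c hcv hcy
          obtain ⟨x, -, hx⟩ := Finset.mem_image.1 (hsub hcy)
          simp only [hgL2] at hx
          by_cases hxs : x ∈ S
          · rw [if_pos hxs] at hx
            exact absurd (hx ▸ Finset.mem_image_of_mem (fun x => r (Sum.inl x)) hxs)
              (h2a v1 hv1F c hcv)
          · rw [if_neg hxs] at hx
            by_cases hx1 : x = v1
            · rw [if_pos hx1] at hx; exact hx.symm
            · rw [if_neg hx1] at hx
              by_cases hx2 : x = v2
              · rw [if_pos hx2] at hx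
                exact absurd hcv (h2b v2 hv2F v1 hv1F (Ne.symm hv12) c (hx ▸ hc2))
              · rw [if_neg hx2] at hx
                have hxF : x ∈ F := Finset.mem_sdiff.2 ⟨Finset.mem_univ x, hxs⟩
                exact absurd hcv (h2b x hxF v1 hv1F hx1 c (hx ▸ hd x))
        · intro c hcv hcy
          obtain ⟨x, -, hx⟩ := Finset.mem_image.1 (hsub hcy)
          simp only [hgL2] at hx
          by_cases hxs : x ∈ S
          · rw [if_pos hxs] at hx
            exact absurd (hx ▸ Finset.mem_image_of_mem (fun x => r (Sum.inl x)) hxs)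
              (h2a v2 hv2F c hcv)
          · rw [if_neg hxs] at hx
            by_cases hx1 : x = v1
            · rw [if_pos hx1] at hx
              exact absurd hcv (h2b v1 hv1F v2 hv2F hv12 c (hx ▸ hc1))
            · rw [if_neg hx1] at hx
              by_cases hx2 : x = v2
              · rw [if_pos hx2] at hx; exact hx.symm
              · rw [if_neg hx2] at hx
                have hxF : x ∈ F := Finset.mem_sdiff.2 ⟨Finset.mem_univ x, hxs⟩
                exact absurd hcv (h2b x hxF v2 hv2F hx2 c (hx ▸ hd x))
      by_cases hgood : ∃ c1 ∈ L (Sum.inl v1), ∃ c2 ∈ L (Sum.inl v2),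
          ∀ y, (L (Sum.inr y) \ Finset.image (gL2 c1 c2) Finset.univ).Nonempty
      · obtain ⟨c1, hc1, c2, hc2, hav⟩ := hgood
        exact case_build L r D (gL2 c1 c2) (hg c1 hc1 c2 hc2) hav S
          (fun x hx => ⟨hSD x hx, by rw [hgL2]; simp [hx]⟩) ∅ (by simp)
          (by simp only [Finset.card_empty, Nat.add_zero, hScard]; exact h2m)
      · exfalso
        push_neg at hgood
        have hgood' : ∀ c1 ∈ L (Sum.inl v1), ∀ c2 ∈ L (Sum.inl v2), ∃ y,
            L (Sum.inr y) \ Finset.image (gL2 c1 c2) Finset.univ = ∅ := by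
          intro c1 hc1 c2 hc2
          obtain ⟨y, hy⟩ := hgood c1 hc1 c2 hc2
          exact ⟨y, hy⟩
        obtain ⟨c2, hc2, c2', hc2', hne⟩ := Finset.one_lt_card.1
          (show 1 < (L (Sum.inl v2)).card by rw [hL]; omega)
        set φ : ℕ → Fin n := fun c1 =>
          if h : c1 ∈ L (Sum.inl v1) then (hgood' c1 h c2 hc2).choose else ⟨0, hnpos⟩ with hφ_def
        set ψ : ℕ → Fin n := fun c1 =>
          if h : c1 ∈ L (Sum.inl v1) then (hgood' c1 h c2' hc2').choose else ⟨0, hnpos⟩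
          with hψ_def
        have hφ : ∀ c1 (h : c1 ∈ L (Sum.inl v1)),
            L (Sum.inr (φ c1)) \ Finset.image (gL2 c1 c2) Finset.univ = ∅ := by
          intro c1 h
          rw [hφ_def]; simp only [dif_pos h]
          exact (hgood' c1 h c2 hc2).choose_spec
        have hψ : ∀ c1 (h : c1 ∈ L (Sum.inl v1)),
            L (Sum.inr (ψ c1)) \ Finset.image (gL2 c1 c2') Finset.univ = ∅ := by
          intro c1 h
          rw [hψ_def]; simp only [dif_pos h]
          exact (hgood' c1 h c2' hc2').choose_spec
        have hmemv1 : ∀ (c1 c2'' : ℕ), c1 ∈ Finset.image (gL2 c1 c2'') Finset.univ := by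
          intro c1 c2''
          refine Finset.mem_image.2 ⟨v1, Finset.mem_univ _, ?_⟩
          simp [hgL2, if_neg hv1S]
        have hmemv2 : ∀ (c1 c2'' : ℕ), c2'' ∈ Finset.image (gL2 c1 c2'') Finset.univ := by
          intro c1 c2''
          refine Finset.mem_image.2 ⟨v2, Finset.mem_univ _, ?_⟩
          simp [hgL2, if_neg hv2S, if_neg (show ¬ v2 = v1 from fun h => hv12 h.symm)]
        have hinjφ : Set.InjOn φ (L (Sum.inl v1)) := by
          intro a ha b hb hab
          have keya := key a c2 ha hc2 (φ a) (hφ a ha)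
          have keyb := key b c2 hb hc2 (φ b) (hφ b hb)
          have hbmem : b ∈ L (Sum.inr (φ a)) := by
            rw [hab, keyb.1]; exact hmemv1 b c2
          exact (keya.2.1 b hb hbmem).symm
        have hinjψ : Set.InjOn ψ (L (Sum.inl v1)) := by
          intro a ha b hb hab
          have keya := key a c2' ha hc2' (ψ a) (hψ a ha)
          have keyb := key b c2' hb hc2' (ψ b) (hψ b hb)
          have hbmem : b ∈ L (Sum.inr (ψ a)) := by
            rw [hab, keyb.1]; exact hmemv1 b c2'
          exact (keya.2.1 b hb hbmem).symm
        have hdisj : Disjoint ((L (Sum.inl v1)).image φ) ((L (Sum.inl v1)).image ψ) := by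
          rw [Finset.disjoint_left]
          rintro y hy hy'
          obtain ⟨a, ha, rfl⟩ := Finset.mem_image.1 hy
          obtain ⟨b, hb, hba⟩ := Finset.mem_image.1 hy'
          have keya := key a c2 ha hc2 (φ a) (hφ a ha)
          have keyb := key b c2' hb hc2' (ψ b) (hψ b hb)
          have hc2'mem : c2' ∈ L (Sum.inr (φ a)) := by
            rw [← hba, keyb.1]; exact hmemv2 b c2'
          exact hne (keya.2.2 c2' hc2' hc2'mem).symm
        have hcard1 : ((L (Sum.inl v1)).image φ).card = n := by
          rw [Finset.card_image_of_injOn hinjφ, hL]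
        have hcard2 : ((L (Sum.inl v1)).image ψ).card = n := by
          rw [Finset.card_image_of_injOn hinjψ, hL]
        have := Finset.card_le_univ (((L (Sum.inl v1)).image φ) ∪ ((L (Sum.inl v1)).image ψ))
        rw [Finset.card_union_of_disjoint hdisj, hcard1, hcard2] at this
        simp only [Fintype.card_fin] at this
        omega
    · -- k = 1
      have hFone : F.card = 1 := by rw [hFcard]; omega
      obtain ⟨v, hFv⟩ := Finset.card_eq_one.1 hFone
      have hvF : v ∈ F := hFv ▸ Finset.mem_singleton_self v
      have hvS : v ∉ S := (Finset.mem_sdiff.1 hvF).2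
      have hxv : ∀ x : Fin n, x ∉ S → x = v := by
        intro x hx
        have hxF : x ∈ F := Finset.mem_sdiff.2 ⟨Finset.mem_univ x, hx⟩
        rw [hFv] at hxF
        exact Finset.mem_singleton.1 hxF
      set gL1 : ℕ → Fin n → ℕ := fun c x => if x ∈ S then r (Sum.inl x) else c with hgL1
      have hg1 : ∀ c ∈ L (Sum.inl v), ∀ x, gL1 c x ∈ L (Sum.inl x) := by
        intro c hc x
        rw [hgL1]
        by_cases hx : x ∈ S
        · simp only [if_pos hx]; exact hrS x hx
        · simp only [if_neg hx]; rw [hxv x hx]; exact hc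
      by_cases hgood : ∃ c ∈ L (Sum.inl v),
          ∀ y, (L (Sum.inr y) \ Finset.image (gL1 c) Finset.univ).Nonempty
      · obtain ⟨c, hc, hav⟩ := hgood
        exact case_build L r D (gL1 c) (hg1 c hc) hav S
          (fun x hx => ⟨hSD x hx, by rw [hgL1]; simp [hx]⟩) ∅ (by simp)
          (by simp only [Finset.card_empty, Nat.add_zero, hScard]; exact h2m)
      push_neg at hgood
      have hgood' : ∀ c ∈ L (Sum.inl v), ∃ y,
          L (Sum.inr y) = Finset.image (gL1 c) Finset.univ := by
        intro c hc
        obtain ⟨y, hy⟩ := hgood c hc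
        have hy' := Finset.sdiff_eq_empty_iff_subset.1 hy
        exact ⟨y, Finset.eq_of_subset_of_card_le hy'
          (by rw [hL]; exact le_trans Finset.card_image_le (by simp))⟩
      have himg : ∀ c, Finset.image (gL1 c) Finset.univ = insert c R := by
        intro c
        apply Finset.Subset.antisymm
        · intro b hb
          obtain ⟨x, -, hx⟩ := Finset.mem_image.1 hb
          simp only [hgL1] at hx
          by_cases hxs : x ∈ S
          · rw [if_pos hxs] at hx
            exact Finset.mem_insert_of_mem (hx ▸ Finset.mem_image_of_mem _ hxs)
          · rw [if_neg hxs] at hx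
            exact hx ▸ Finset.mem_insert_self c R
        · intro b hb
          rcases Finset.mem_insert.1 hb with rfl | hbR
          · exact Finset.mem_image.2 ⟨v, Finset.mem_univ v, by simp [hgL1, hvS]⟩
          · obtain ⟨x, hxS, hx⟩ := Finset.mem_image.1 hbR
            refine Finset.mem_image.2 ⟨x, Finset.mem_univ x, ?_⟩
            simp only [hgL1, if_pos hxS]
            exact hx
      have hally : ∀ y : Fin n, ∃ c ∈ L (Sum.inl v), L (Sum.inr y) = insert c R := by
        set φ : ℕ → Fin n := fun c =>
          if h : c ∈ L (Sum.inl v) then (hgood' c h).choose else ⟨0, hnpos⟩ with hφ_def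
        have hφ : ∀ c (h : c ∈ L (Sum.inl v)), L (Sum.inr (φ c)) = insert c R := by
          intro c h
          rw [hφ_def]; simp only [dif_pos h]
          rw [(hgood' c h).choose_spec, himg]
        have hinjφ : Set.InjOn φ (L (Sum.inl v)) := by
          intro a ha b hb hab
          have h1 := hφ a ha
          have h2 := hφ b hb
          rw [hab, h2] at h1
          have : a ∈ insert b R := h1 ▸ Finset.mem_insert_self a R
          rcases Finset.mem_insert.1 this with h | h
          · exact h
          · exact absurd h (h2a v hvF a ha)
        have huniv : (L (Sum.inl v)).image φ = Finset.univ := by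
          apply Finset.eq_univ_of_card
          rw [Finset.card_image_of_injOn hinjφ, hL, Fintype.card_fin]
        intro y
        have : y ∈ (L (Sum.inl v)).image φ := huniv ▸ Finset.mem_univ y
        obtain ⟨c, hc, hcy⟩ := Finset.mem_image.1 this
        exact ⟨c, hc, by rw [← hcy]; exact hφ c hc⟩
      have hRsub : ∀ y, R ⊆ L (Sum.inr y) := by
        intro y
        obtain ⟨c, -, hy⟩ := hally y
        rw [hy]
        exact Finset.subset_insert _ _
      have hDLn : D.toLeft.card ≤ n := le_trans (Finset.card_le_univ _) (by simp)
      have hDRpos : 0 < D.toRight.card := by omega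
      obtain ⟨u0, hu0⟩ := Finset.card_pos.1 hDRpos
      have hu0D : Sum.inr u0 ∈ D := Finset.mem_toRight.1 hu0
      have hru0 : r (Sum.inr u0) ∈ L (Sum.inr u0) := hr _ hu0D
      by_cases hcase : r (Sum.inr u0) ∈ R
      · obtain ⟨w, hwS, hw⟩ := Finset.mem_image.1 hcase
        have hgex : (L (Sum.inl w) \ {r (Sum.inl w)}).Nonempty := by
          rw [← Finset.card_pos]
          have h1 := Finset.le_card_sdiff ({r (Sum.inl w)} : Finset ℕ) (L (Sum.inl w))
          have h2 := hL (Sum.inl w)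
          have h3 : ({r (Sum.inl w)} : Finset ℕ).card = 1 := Finset.card_singleton _
          omega
        obtain ⟨g, hgmem⟩ := hgex
        obtain ⟨hgL', hgne⟩ := Finset.mem_sdiff.1 hgmem
        rw [Finset.mem_singleton] at hgne
        set gLc : Fin n → ℕ :=
          fun x => if x = w then g else if x ∈ S then r (Sum.inl x) else d x with hgLc
        have hgc : ∀ x, gLc x ∈ L (Sum.inl x) := by
          intro x
          rw [hgLc]
          by_cases hx1 : x = w
          · subst hx1; simp only [if_pos rfl]; exact hgL'
          · simp only [if_neg hx1]
            by_cases hx2 : x ∈ S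
            · simp only [if_pos hx2]; exact hrS x hx2
            · simp only [if_neg hx2]; exact hd x
        have hnotin : r (Sum.inl w) ∉ Finset.image gLc Finset.univ := by
          intro hmem
          obtain ⟨x, -, hx⟩ := Finset.mem_image.1 hmem
          simp only [hgLc] at hx
          by_cases hx1 : x = w
          · rw [if_pos hx1] at hx; exact hgne hx
          · rw [if_neg hx1] at hx
            by_cases hx2 : x ∈ S
            · rw [if_pos hx2] at hx
              exact hx1 (hinj hx2 hwS hx)
            · rw [if_neg hx2] at hx
              have hxv' := hxv x hx2
              subst hxv'
              exact h2a x hvF (d x) (hd x) (hx ▸ Finset.mem_image_of_mem _ hwS)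
        have hav : ∀ y, (L (Sum.inr y) \ Finset.image gLc Finset.univ).Nonempty :=
          fun y => ⟨r (Sum.inl w), Finset.mem_sdiff.2
            ⟨hRsub y (Finset.mem_image_of_mem _ hwS), hnotin⟩⟩
        refine case_build L r D gLc hgc hav (S.erase w) ?_ {u0} ?_ ?_
        · intro x hx
          refine ⟨hSD x (Finset.mem_of_mem_erase hx), ?_⟩
          rw [hgLc]
          simp only [if_neg (Finset.ne_of_mem_erase hx), if_pos (Finset.mem_of_mem_erase hx)]
        · intro y hy
          rw [Finset.mem_singleton] at hy
          subst hy
          exact ⟨hu0D, Finset.mem_sdiff.2 ⟨hru0, by rw [← hw]; exact hnotin⟩⟩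
        · rw [Finset.card_erase_of_mem hwS, hScard, Finset.card_singleton]
          omega
      · obtain ⟨c0, hc0v, hu0list⟩ := hally u0
        have hrho : r (Sum.inr u0) = c0 := by
          have h := hru0
          rw [hu0list] at h
          rcases Finset.mem_insert.1 h with h' | h'
          · exact h'
          · exact absurd h' hcase
        have hSne : S.Nonempty := Finset.card_pos.1 (by omega)
        obtain ⟨w, hwS⟩ := hSne
        have hgex : (L (Sum.inl w) \ {r (Sum.inl w), r (Sum.inr u0)}).Nonempty := by
          rw [← Finset.card_pos]
          have h1 := Finset.le_card_sdiff ({r (Sum.inl w), r (Sum.inr u0)} : Finset ℕ)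
            (L (Sum.inl w))
          have h2 := hL (Sum.inl w)
          have h3 : ({r (Sum.inl w), r (Sum.inr u0)} : Finset ℕ).card ≤ 2 :=
            le_trans (Finset.card_insert_le _ _) (by simp)
          omega
        obtain ⟨g, hgmem⟩ := hgex
        obtain ⟨hgL', hgne⟩ := Finset.mem_sdiff.1 hgmem
        have hg1 : g ≠ r (Sum.inl w) := by
          intro h; exact hgne (by rw [h]; exact Finset.mem_insert_self _ _)
        have hg2 : g ≠ r (Sum.inr u0) := by
          intro h
          exact hgne (by rw [h]; exact Finset.mem_insert_of_mem (Finset.mem_singleton_self _))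
        have hcex : (L (Sum.inl v) \ {r (Sum.inr u0)}).Nonempty := by
          rw [← Finset.card_pos]
          have h1 := Finset.le_card_sdiff ({r (Sum.inr u0)} : Finset ℕ) (L (Sum.inl v))
          have h2 := hL (Sum.inl v)
          have h3 : ({r (Sum.inr u0)} : Finset ℕ).card = 1 := Finset.card_singleton _
          omega
        obtain ⟨c, hcmem⟩ := hcex
        obtain ⟨hcv, hcne⟩ := Finset.mem_sdiff.1 hcmem
        rw [Finset.mem_singleton] at hcne
        set gLc : Fin n → ℕ :=
          fun x => if x = w then g else if x ∈ S then r (Sum.inl x) else c with hgLc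
        have hgc : ∀ x, gLc x ∈ L (Sum.inl x) := by
          intro x
          rw [hgLc]
          by_cases hx1 : x = w
          · subst hx1; simp only [if_pos rfl]; exact hgL'
          · simp only [if_neg hx1]
            by_cases hx2 : x ∈ S
            · simp only [if_pos hx2]; exact hrS x hx2
            · simp only [if_neg hx2]; rw [hxv x hx2]; exact hcv
        have hcR : c ∉ R := h2a v hvF c hcv
        have hnotinW : r (Sum.inl w) ∉ Finset.image gLc Finset.univ := by
          intro hmem
          obtain ⟨x, -, hx⟩ := Finset.mem_image.1 hmem
          simp only [hgLc] at hx
          by_cases hx1 : x = w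
          · rw [if_pos hx1] at hx; exact hg1 hx
          · rw [if_neg hx1] at hx
            by_cases hx2 : x ∈ S
            · rw [if_pos hx2] at hx
              exact hx1 (hinj hx2 hwS hx)
            · rw [if_neg hx2] at hx
              exact hcR (hx ▸ Finset.mem_image_of_mem _ hwS)
        have hnotinRho : r (Sum.inr u0) ∉ Finset.image gLc Finset.univ := by
          intro hmem
          obtain ⟨x, -, hx⟩ := Finset.mem_image.1 hmem
          simp only [hgLc] at hx
          by_cases hx1 : x = w
          · rw [if_pos hx1] at hx; exact hg2 hx
          · rw [if_neg hx1] at hx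
            by_cases hx2 : x ∈ S
            · rw [if_pos hx2] at hx
              exact hcase (hx ▸ Finset.mem_image_of_mem _ hx2)
            · rw [if_neg hx2] at hx
              exact hcne hx
        have hav : ∀ y, (L (Sum.inr y) \ Finset.image gLc Finset.univ).Nonempty :=
          fun y => ⟨r (Sum.inl w), Finset.mem_sdiff.2
            ⟨hRsub y (Finset.mem_image_of_mem _ hwS), hnotinW⟩⟩
        refine case_build L r D gLc hgc hav (S.erase w) ?_ {u0} ?_ ?_
        · intro x hx
          refine ⟨hSD x (Finset.mem_of_mem_erase hx), ?_⟩
          rw [hgLc]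
          simp only [if_neg (Finset.ne_of_mem_erase hx), if_pos (Finset.mem_of_mem_erase hx)]
        · intro y hy
          rw [Finset.mem_singleton] at hy
          subst hy
          exact ⟨hu0D, Finset.mem_sdiff.2 ⟨hru0, hnotinRho⟩⟩
        · rw [Finset.card_erase_of_mem hwS, hScard, Finset.card_singleton]
          omega
    · -- k = 0 : S = univ
      have hSuniv : S = Finset.univ :=
        (Finset.card_eq_iff_eq_univ S).1 (by rw [hScard, hk, Fintype.card_fin])
      have hallD : ∀ x : Fin n, Sum.inl x ∈ D := by
        intro x
        exact hSD x (by rw [hSuniv]; exact Finset.mem_univ x)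
      have hrx : ∀ x, r (Sum.inl x) ∈ L (Sum.inl x) := fun x => hr _ (hallD x)
      have hinj2 : ∀ a b : Fin n, r (Sum.inl a) = r (Sum.inl b) → a = b := by
        intro a b h
        refine hinj ?_ ?_ h <;> rw [hSuniv] <;> simp
      have hRw : ∀ w : Fin n, r (Sum.inl w) ∈ R := by
        intro w
        rw [hR_def]
        exact Finset.mem_image_of_mem _ (by rw [hSuniv]; exact Finset.mem_univ w)
      set gLw : Fin n → ℕ → Fin n → ℕ := fun w g x => if x = w then g else r (Sum.inl x)
        with hgLw
      have hgw : ∀ w g, g ∈ L (Sum.inl w) → ∀ x, gLw w g x ∈ L (Sum.inl x) := by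
        intro w g hg x
        rw [hgLw]
        by_cases hx : x = w
        · subst hx; simp only [if_pos rfl]; exact hg
        · simp only [if_neg hx]; exact hrx x
      have hrwnotin : ∀ w g, g ≠ r (Sum.inl w) →
          r (Sum.inl w) ∉ Finset.image (gLw w g) Finset.univ := by
        intro w g hgne hmem
        obtain ⟨x, -, hx⟩ := Finset.mem_image.1 hmem
        simp only [hgLw] at hx
        by_cases hx1 : x = w
        · rw [if_pos hx1] at hx; exact hgne hx
        · rw [if_neg hx1] at hx; exact hx1 (hinj2 x w hx)
      have hwmem : ∀ w g w', w' ≠ w → r (Sum.inl w') ∈ Finset.image (gLw w g) Finset.univ := by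
        intro w g w' hne
        refine Finset.mem_image.2 ⟨w', Finset.mem_univ _, ?_⟩
        rw [hgLw]
        simp only [if_neg hne]
      have hsmallR : ∀ w g, g ∈ R → g ≠ r (Sum.inl w) →
          (Finset.image (gLw w g) Finset.univ).card < n := by
        intro w g hgR hgne
        have hsub : Finset.image (gLw w g) Finset.univ ⊆ R.erase (r (Sum.inl w)) := by
          intro b hb
          obtain ⟨x, -, hx⟩ := Finset.mem_image.1 hb
          simp only [hgLw] at hx
          by_cases hx1 : x = w
          · rw [if_pos hx1] at hx
            exact Finset.mem_erase.2 ⟨hx ▸ hgne, hx ▸ hgR⟩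
          · rw [if_neg hx1] at hx
            exact Finset.mem_erase.2 ⟨fun h => hx1 (hinj2 x w (by rw [hx, h])), hx ▸ hRw x⟩
        have hle := Finset.card_le_card hsub
        rw [Finset.card_erase_of_mem (hRw w), hRcard] at hle
        omega
      have heqC : ∀ (h : Fin n → ℕ) (y : Fin n),
          ¬(L (Sum.inr y) \ Finset.image h Finset.univ).Nonempty →
          L (Sum.inr y) = Finset.image h Finset.univ := by
        intro h y hy
        refine Finset.eq_of_subset_of_card_le
          (Finset.sdiff_eq_empty_iff_subset.1 (Finset.not_nonempty_iff_eq_empty.1 hy)) ?_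
        rw [hL]
        exact le_trans Finset.card_image_le (by simp)
      by_cases hgood : ∀ y, (L (Sum.inr y) \ R).Nonempty
      · refine case_build L r D (fun x => r (Sum.inl x)) hrx ?_ S
          (fun x hx => ⟨hSD x hx, rfl⟩) ∅ (by simp)
          (by simp only [Finset.card_empty, Nat.add_zero, hScard]; exact h2m)
        have : Finset.image (fun x => r (Sum.inl x)) Finset.univ = R := by
          rw [hR_def, hSuniv]
        rw [this]
        exact hgood
      push_neg at hgood
      obtain ⟨ustar, hustar0⟩ := hgood
      have hustar : L (Sum.inr ustar) = R := by
        refine Finset.eq_of_subset_of_card_le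
          (Finset.sdiff_eq_empty_iff_subset.1
            hustar0) ?_
        rw [hL, hRcard]
        omega
      have hDRcard : n - 1 ≤ D.toRight.card := by
        have hDLn : D.toLeft.card ≤ n := le_trans (Finset.card_le_univ _) (by simp)
        omega
      by_cases hA : ∃ u0 ∈ D.toRight, r (Sum.inr u0) ∉ R
      · -- Subcase A
        obtain ⟨u0, hu0R, hu0notR⟩ := hA
        have hu0D : Sum.inr u0 ∈ D := Finset.mem_toRight.1 hu0R
        have hru0 : r (Sum.inr u0) ∈ L (Sum.inr u0) := hr _ hu0D
        have hgoodpair : ∃ w : Fin n, ∃ g ∈ L (Sum.inl w), g ≠ r (Sum.inl w) ∧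
            g ≠ r (Sum.inr u0) ∧
            ∀ y, (L (Sum.inr y) \ Finset.image (gLw w g) Finset.univ).Nonempty := by
          by_contra hbad
          push_neg at hbad
          -- For every w we get many right vertices with special structure
          have hIw : ∀ w : Fin n, ∃ I : Finset (Fin n), n - 2 ≤ I.card ∧
              ∀ y ∈ I, r (Sum.inl w) ∉ L (Sum.inr y) ∧
                (∀ w', w' ≠ w → r (Sum.inl w') ∈ L (Sum.inr y)) := by
            intro w
            set E : Finset ℕ := L (Sum.inl w) \ {r (Sum.inl w), r (Sum.inr u0)} with hE_def
            have hEprop : ∀ g ∈ E, g ∈ L (Sum.inl w) ∧ g ≠ r (Sum.inl w) ∧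
                g ≠ r (Sum.inr u0) := by
              intro g hg
              obtain ⟨hg1, hg2⟩ := Finset.mem_sdiff.1 hg
              simp only [Finset.mem_insert, Finset.mem_singleton, not_or] at hg2
              exact ⟨hg1, hg2.1, hg2.2⟩
            have hEcard : n - 2 ≤ E.card := by
              have h1 : (L (Sum.inl w)).card - ({r (Sum.inl w), r (Sum.inr u0)} : Finset ℕ).card
                  ≤ E.card := by
                rw [hE_def]
                exact Finset.le_card_sdiff _ _
              have h2 := hL (Sum.inl w)
              have h3 : ({r (Sum.inl w), r (Sum.inr u0)} : Finset ℕ).card ≤ 2 :=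
                le_trans (Finset.card_insert_le _ _) (by simp)
              omega
            have hEnotR : ∀ g ∈ E, g ∉ R := by
              intro g hg hgR
              obtain ⟨hg1, hg2, hg3⟩ := hEprop g hg
              obtain ⟨y, hy⟩ := hbad w g hg1 hg2 hg3
              exact (Finset.not_nonempty_iff_eq_empty.2 hy) (avail_of_small L hL (gLw w g) (hsmallR w g hgR hg2) y)
            set ζ : ℕ → Fin n := fun g =>
              if h : g ∈ E then (hbad w g (hEprop g h).1 (hEprop g h).2.1
                (hEprop g h).2.2).choose else ⟨0, hnpos⟩ with hζ_def
            have hζ : ∀ g (h : g ∈ E),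
                L (Sum.inr (ζ g)) = Finset.image (gLw w g) Finset.univ := by
              intro g h
              rw [hζ_def]
              simp only [dif_pos h]
              exact heqC _ _ (Finset.not_nonempty_iff_eq_empty.2 (hbad w g (hEprop g h).1 (hEprop g h).2.1 (hEprop g h).2.2).choose_spec)
            have hζmem : ∀ g (h : g ∈ E), g ∈ L (Sum.inr (ζ g)) := by
              intro g h
              rw [hζ g h]
              refine Finset.mem_image.2 ⟨w, Finset.mem_univ _, ?_⟩
              simp [hgLw]
            have hinjζ : Set.InjOn ζ E := by
              intro a ha b hb hab
              have hbmem : b ∈ L (Sum.inr (ζ a)) := hab ▸ hζmem b hb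
              rw [hζ a ha] at hbmem
              obtain ⟨x, -, hx⟩ := Finset.mem_image.1 hbmem
              simp only [hgLw] at hx
              by_cases hx1 : x = w
              · rw [if_pos hx1] at hx; exact hx.symm ▸ rfl
              · rw [if_neg hx1] at hx
                exact absurd (hx ▸ hRw x) (hEnotR b hb)
            refine ⟨E.image ζ, ?_, ?_⟩
            · rw [Finset.card_image_of_injOn hinjζ]; exact hEcard
            · intro y hy
              obtain ⟨g, hg, rfl⟩ := Finset.mem_image.1 hy
              constructor
              · rw [hζ g hg]
                exact hrwnotin w g (hEprop g hg).2.1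
              · intro w' hw'
                rw [hζ g hg]
                exact hwmem w g w' hw'
          -- three distinct vertices give disjoint sets
          have h0n : (0 : ℕ) < n := by omega
          have h1n : (1 : ℕ) < n := by omega
          have h2n : (2 : ℕ) < n := by omega
          obtain ⟨I1, hI1c, hI1⟩ := hIw ⟨0, h0n⟩
          obtain ⟨I2, hI2c, hI2⟩ := hIw ⟨1, h1n⟩
          obtain ⟨I3, hI3c, hI3⟩ := hIw ⟨2, h2n⟩
          have hd12 : Disjoint I1 I2 := by
            rw [Finset.disjoint_left]
            intro y hy1 hy2
            exact (hI1 y hy1).1 ((hI2 y hy2).2 ⟨0, h0n⟩ (by simp [Fin.ext_iff]))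
          have hd13 : Disjoint I1 I3 := by
            rw [Finset.disjoint_left]
            intro y hy1 hy3
            exact (hI1 y hy1).1 ((hI3 y hy3).2 ⟨0, h0n⟩ (by simp [Fin.ext_iff]))
          have hd23 : Disjoint I2 I3 := by
            rw [Finset.disjoint_left]
            intro y hy2 hy3
            exact (hI2 y hy2).1 ((hI3 y hy3).2 ⟨1, h1n⟩ (by simp [Fin.ext_iff]))
          have hcard : (I1 ∪ I2 ∪ I3).card = I1.card + I2.card + I3.card := by
            rw [Finset.card_union_of_disjoint (Finset.disjoint_union_left.2 ⟨hd13, hd23⟩),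
              Finset.card_union_of_disjoint hd12]
          have hle := Finset.card_le_univ (I1 ∪ I2 ∪ I3)
          rw [hcard] at hle
          simp only [Fintype.card_fin] at hle
          omega
        obtain ⟨w, g, hgmem, hgrw, hgru0, hav⟩ := hgoodpair
        have hnotin : r (Sum.inr u0) ∉ Finset.image (gLw w g) Finset.univ := by
          intro hmem
          obtain ⟨x, -, hx⟩ := Finset.mem_image.1 hmem
          simp only [hgLw] at hx
          by_cases hx1 : x = w
          · rw [if_pos hx1] at hx; exact hgru0 hx
          · rw [if_neg hx1] at hx
            exact hu0notR (hx ▸ hRw x)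
        refine case_build L r D (gLw w g) (hgw w g hgmem) hav (Finset.univ.erase w) ?_ {u0} ?_ ?_
        · intro x hx
          refine ⟨hallD x, ?_⟩
          rw [hgLw]
          simp only [if_neg (Finset.ne_of_mem_erase hx)]
        · intro y hy
          rw [Finset.mem_singleton] at hy
          subst hy
          exact ⟨hu0D, Finset.mem_sdiff.2 ⟨hru0, hnotin⟩⟩
        · rw [Finset.card_erase_of_mem (Finset.mem_univ w), Finset.card_univ, Fintype.card_fin,
            Finset.card_singleton]
          omega
      · -- Subcase B
        push_neg at hA
        obtain ⟨u1, hu1e⟩ := Finset.card_pos.1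
          (show 0 < (D.toRight.erase ustar).card by
            have := Finset.pred_card_le_card_erase (s := D.toRight) (a := ustar)
            omega)
        have hu1ne : u1 ≠ ustar := Finset.ne_of_mem_erase hu1e
        have hu1R : u1 ∈ D.toRight := Finset.mem_of_mem_erase hu1e
        have hu1D : Sum.inr u1 ∈ D := Finset.mem_toRight.1 hu1R
        obtain ⟨w, -, hw⟩ := Finset.mem_image.1 (hA u1 hu1R)
        set T : Finset (Fin n) := D.toRight.filter (fun u => r (Sum.inr u) = r (Sum.inl w))
          with hT_def
        have hu1T : u1 ∈ T := Finset.mem_filter.2 ⟨hu1R, hw.symm⟩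
        have hT1 : 1 ≤ T.card := Finset.card_pos.2 ⟨u1, hu1T⟩
        have hgoodg : ∃ g ∈ L (Sum.inl w), g ≠ r (Sum.inl w) ∧
            ∀ y, (L (Sum.inr y) \ Finset.image (gLw w g) Finset.univ).Nonempty := by
          by_contra hbad
          push_neg at hbad
          set E : Finset ℕ := (L (Sum.inl w)).erase (r (Sum.inl w)) with hE_def
          have hEcard : E.card = n - 1 := by
            rw [hE_def, Finset.card_erase_of_mem (hrx w), hL]
          have hEprop : ∀ g ∈ E, g ∈ L (Sum.inl w) ∧ g ≠ r (Sum.inl w) := fun g hg =>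
            ⟨Finset.mem_of_mem_erase hg, Finset.ne_of_mem_erase hg⟩
          have hEnotR : ∀ g ∈ E, g ∉ R := by
            intro g hg hgR
            obtain ⟨hg1, hg2⟩ := hEprop g hg
            obtain ⟨y, hy⟩ := hbad g hg1 hg2
            exact (Finset.not_nonempty_iff_eq_empty.2 hy) (avail_of_small L hL (gLw w g) (hsmallR w g hgR hg2) y)
          set ζ : ℕ → Fin n := fun g =>
            if h : g ∈ E then (hbad g (hEprop g h).1 (hEprop g h).2).choose
            else ⟨0, hnpos⟩ with hζ_def
          have hζ : ∀ g (h : g ∈ E),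
              L (Sum.inr (ζ g)) = Finset.image (gLw w g) Finset.univ := by
            intro g h
            rw [hζ_def]
            simp only [dif_pos h]
            exact heqC _ _ (Finset.not_nonempty_iff_eq_empty.2 (hbad g (hEprop g h).1 (hEprop g h).2).choose_spec)
          have hζmem : ∀ g (h : g ∈ E), g ∈ L (Sum.inr (ζ g)) := by
            intro g h
            rw [hζ g h]
            refine Finset.mem_image.2 ⟨w, Finset.mem_univ _, ?_⟩
            simp [hgLw]
          have hinjζ : Set.InjOn ζ E := by
            intro a ha b hb hab
            have hbmem : b ∈ L (Sum.inr (ζ a)) := hab ▸ hζmem b hb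
            rw [hζ a ha] at hbmem
            obtain ⟨x, -, hx⟩ := Finset.mem_image.1 hbmem
            simp only [hgLw] at hx
            by_cases hx1 : x = w
            · rw [if_pos hx1] at hx; exact hx.symm ▸ rfl
            · rw [if_neg hx1] at hx
              exact absurd (hx ▸ hRw x) (hEnotR b hb)
          have hrange : E.image ζ ⊆ Finset.univ \ insert ustar T := by
            intro y hy
            obtain ⟨g, hg, rfl⟩ := Finset.mem_image.1 hy
            have hnotC : r (Sum.inl w) ∉ L (Sum.inr (ζ g)) := by
              rw [hζ g hg]
              exact hrwnotin w g (hEprop g hg).2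
            refine Finset.mem_sdiff.2 ⟨Finset.mem_univ _, ?_⟩
            intro hmem
            rcases Finset.mem_insert.1 hmem with rfl | hmemT
            · exact hnotC (hustar ▸ hRw w)
            · obtain ⟨hDu, hru⟩ := Finset.mem_filter.1 hmemT
              exact hnotC (hru ▸ hr _ (Finset.mem_toRight.1 hDu))
          have h2card : 2 ≤ (insert ustar T).card :=
            Finset.one_lt_card.2 ⟨u1, Finset.mem_insert_of_mem hu1T, ustar,
              Finset.mem_insert_self _ _, hu1ne⟩
          have hle := Finset.card_le_card hrange
          rw [Finset.card_image_of_injOn hinjζ, hEcard,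
            Finset.card_sdiff_of_subset (Finset.subset_univ _), Finset.card_univ, Fintype.card_fin] at hle
          have := Finset.card_le_univ (insert ustar T)
          simp only [Fintype.card_fin] at this
          omega
        obtain ⟨g, hgmem, hgrw, hav⟩ := hgoodg
        refine case_build L r D (gLw w g) (hgw w g hgmem) hav (Finset.univ.erase w) ?_ T ?_ ?_
        · intro x hx
          refine ⟨hallD x, ?_⟩
          rw [hgLw]
          simp only [if_neg (Finset.ne_of_mem_erase hx)]
        · intro u hu
          obtain ⟨hDu, hru⟩ := Finset.mem_filter.1 hu
          refine ⟨Finset.mem_toRight.1 hDu, Finset.mem_sdiff.2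
            ⟨hr _ (Finset.mem_toRight.1 hDu), ?_⟩⟩
          rw [hru]
          exact hrwnotin w g hgrw
        · rw [Finset.card_erase_of_mem (Finset.mem_univ w), Finset.card_univ, Fintype.card_fin]
          omega

end Main


theorem stmt_16 (n : ℕ) (hn : 4 ≤ n) (L : Fin n ⊕ Fin n → Finset ℕ)
    (hL : ∀ v, (L v).card = n)
    (D : Finset (Fin n ⊕ Fin n)) (hD : D.Nonempty)
    (r : Fin n ⊕ Fin n → ℕ) (hr : ∀ v ∈ D, r v ∈ L v) :
    ∃ f, properListColoring (completeBipartiteGraph (Fin n) (Fin n)) L f ∧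
      D.card ≤ 2 * (D.filter fun v => f v = r v).card := by
  classical
  by_cases hside : D.toRight.card ≤ D.toLeft.card
  · exact main_lemma hn L hL D hD r hr hside
  · set sw : Fin n ⊕ Fin n → Fin n ⊕ Fin n := Sum.swap with hsw
    have hswsw : ∀ v, sw (sw v) = v := fun v => Sum.swap_swap v
    have hswinj : Function.Injective sw := fun a b h => by rw [← hswsw a, h, hswsw]
    set D' : Finset (Fin n ⊕ Fin n) := D.image sw with hD'
    set L' : Fin n ⊕ Fin n → Finset ℕ := fun v => L (sw v) with hL'
    set r' : Fin n ⊕ Fin n → ℕ := fun v => r (sw v) with hr'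
    have hmem : ∀ v, v ∈ D' ↔ sw v ∈ D := by
      intro v
      constructor
      · intro h
        obtain ⟨u, hu, rfl⟩ := Finset.mem_image.1 h
        rw [hswsw]; exact hu
      · intro h
        exact Finset.mem_image.2 ⟨sw v, h, hswsw v⟩
    have hD'card : D'.card = D.card := Finset.card_image_of_injective _ hswinj
    have htL : D'.toLeft = D.toRight := by
      ext x
      rw [Finset.mem_toLeft, Finset.mem_toRight, hmem]
      rfl
    have htR : D'.toRight = D.toLeft := by
      ext x
      rw [Finset.mem_toRight, Finset.mem_toLeft, hmem]
      rfl
    have hside' : D'.toRight.card ≤ D'.toLeft.card := by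
      rw [htL, htR]; omega
    obtain ⟨f', hf', hcount⟩ := main_lemma hn L' (fun v => hL (sw v)) D'
      (hD.image sw) r' (fun v hv => hr _ ((hmem v).1 hv)) hside'
    refine ⟨fun v => f' (sw v), ⟨?_, ?_⟩, ?_⟩
    · intro v
      simpa [hL', hswsw v] using hf'.1 (sw v)
    · intro u v hadj h
      refine hf'.2 (sw u) (sw v) ?_ h
      rcases u with x | x <;> rcases v with y | y <;>
        simp only [completeBipartiteGraph_adj, hsw, Sum.swap_inl, Sum.swap_inr] at hadj ⊢ <;>
        simp_all
    · have hfilter : (D.filter fun v => f' (sw v) = r v).card =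
          (D'.filter fun v => f' v = r' v).card := by
        rw [← Finset.card_image_of_injective (D.filter fun v => f' (sw v) = r v) hswinj]
        congr 1
        ext v
        constructor
        · intro hv
          obtain ⟨u, hu, rfl⟩ := Finset.mem_image.1 hv
          obtain ⟨huD, hueq⟩ := Finset.mem_filter.1 hu
          refine Finset.mem_filter.2 ⟨Finset.mem_image_of_mem _ huD, ?_⟩
          rw [hr']
          simpa [hswsw u] using hueq
        · intro hv
          obtain ⟨hvD', hveq⟩ := Finset.mem_filter.1 hv
          obtain ⟨u, hu, rfl⟩ := Finset.mem_image.1 hvD'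
          refine Finset.mem_image_of_mem _ (Finset.mem_filter.2 ⟨hu, ?_⟩)
          rw [hr'] at hveq
          simpa [hswsw u] using hveq
      rw [hfilter, ← hD'card]
      exact hcount
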